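/- Let m ≥ 2 and let Γ be an m-PCayley digraph of a finite group G such that both Γ and its multipartite complement Γ^{mc} are disconnected. Then m = 2, |G| is even, and Γ is isomorphic to the disjoint union of two complete bipartite graphs K_{|G|/2, |G|/2}. -/

import Mathlib

/-- The arc relation of the `m`-Cayley digraph `Cay(G, S_{i,j})`: there is an arc
from `x_i` to `(sx)_j` for each `s ∈ S_{i,j}`. -/
def arcRel (m : ℕ) {G : Type*} [Group G] (S : Fin m → Fin m → Set G)
    (u v : Fin m × G) : Prop :=
  v.2 * u.2⁻¹ ∈ S u.1 v.1

/-- The multipartite complement of an `m`-PCayley digraph: replace each `S_{i,j}`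
(`i ≠ j`) by its complement `G \\ S_{i,j}`, keeping the diagonal sets empty. -/
def mcCompl (m : ℕ) {G : Type*} [Group G] (S : Fin m → Fin m → Set G) :
    Fin m → Fin m → Set G :=
  fun i j => if i = j then (∅ : Set G) else (S i j)ᶜ

/-- The underlying (simple) graph of the `m`-Cayley digraph `Cay(G, S_{i,j})`. -/
def toGraph (m : ℕ) (G : Type*) [Group G] (S : Fin m → Fin m → Set G) :
    SimpleGraph (Fin m × G) where
  Adj u v := u ≠ v ∧ (arcRel m S u v ∨ arcRel m S v u)
  symm := ⟨fun u v h => ⟨h.1.symm, h.2.symm⟩⟩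
  loopless := ⟨fun v h => h.1 rfl⟩

/-- The disjoint union of two copies of the complete bipartite graph `K_{k,k}`. -/
def twoCompleteBipartite (k : ℕ) : SimpleGraph (Fin 2 × Fin 2 × Fin k) where
  Adj u v := u.1 = v.1 ∧ u.2.1 ≠ v.2.1
  symm := ⟨fun u v h => ⟨h.1.symm, h.2.symm⟩⟩
  loopless := ⟨fun v h => h.2 rfl⟩

namespace PCayAux

open SimpleGraph Set

variable {m : ℕ} {G : Type*} [Group G]

/-- right translation as a graph hom -/
def shiftHom (S : Fin m → Fin m → Set G) (g : G) :
    toGraph m G S →g toGraph m G S where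
  toFun u := (u.1, u.2 * g)
  map_rel' := by
    rintro u v ⟨hne, harc⟩
    constructor
    · intro h
      apply hne
      have h' : (u.1, u.2 * g) = (v.1, v.2 * g) := h
      rw [Prod.mk.injEq] at h'
      exact Prod.ext h'.1 (mul_right_cancel h'.2)
    · have e1 : (v.2 * g) * (u.2 * g)⁻¹ = v.2 * u.2⁻¹ := by group
      have e2 : (u.2 * g) * (v.2 * g)⁻¹ = u.2 * v.2⁻¹ := by group
      unfold arcRel at *
      simp only [e1, e2]
      exact harc

lemma reach_shift {S : Fin m → Fin m → Set G} {u v : Fin m × G} (g : G)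
    (h : (toGraph m G S).Reachable u v) :
    (toGraph m G S).Reachable (u.1, u.2 * g) (v.1, v.2 * g) :=
  h.map (shiftHom S g)

/-- reachability class sets -/
def Aset (S : Fin m → Fin m → Set G) (i j : Fin m) : Set G :=
  {g | (toGraph m G S).Reachable (i, 1) (j, g)}

variable {S : Fin m → Fin m → Set G}

lemma mem_Aset_iff {i j : Fin m} {x y : G} :
    y * x⁻¹ ∈ Aset S i j ↔ (toGraph m G S).Reachable (i, x) (j, y) := by
  constructor
  · intro h
    have := reach_shift (S := S) x (u := (i,1)) (v := (j, y * x⁻¹)) h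
    simpa using this
  · intro h
    have := reach_shift (S := S) x⁻¹ (u := (i,x)) (v := (j, y)) h
    simpa [Aset] using this

lemma one_mem_Aset (i : Fin m) : (1 : G) ∈ Aset S i i := Reachable.refl _

lemma Aset_mul {i k j : Fin m} {a b : G} (ha : a ∈ Aset S i k) (hb : b ∈ Aset S k j) :
    b * a ∈ Aset S i j := by
  have h2 := reach_shift (S := S) a (u := (k,1)) (v := (j,b)) hb
  simp only [one_mul] at h2
  exact ha.trans h2

lemma Aset_inv {i j : Fin m} {a : G} (ha : a ∈ Aset S i j) : a⁻¹ ∈ Aset S j i := by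
  have h := reach_shift (S := S) a⁻¹ (u := (j,a)) (v := (i,1)) ha.symm
  simpa [Aset] using h

lemma Aset_full_mul {i j k : Fin m} (hij : Aset S i j = univ) (hjk : Aset S j k = univ) :
    Aset S i k = univ := by
  ext g
  simp only [mem_univ, iff_true]
  have : g * 1 ∈ Aset S i k :=
    Aset_mul (by rw [hij]; trivial) (by rw [hjk]; trivial)
  simpa using this

lemma Aset_full_inv {i j : Fin m} (hij : Aset S i j = univ) : Aset S j i = univ := by
  ext g
  simp only [mem_univ, iff_true]
  have : g⁻¹⁻¹ ∈ Aset S j i := Aset_inv (by rw [hij]; trivial)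
  simpa using this

/-- if all cross classes are full, the graph is connected -/
lemma connected_of_full (hm : 2 ≤ m)
    (hfull : ∀ i j : Fin m, i ≠ j → Aset S i j = univ) :
    (toGraph m G S).Connected := by
  have hmne : Nonempty (Fin m) := ⟨⟨0, by omega⟩⟩
  constructor
  rintro ⟨i, x⟩ ⟨j, y⟩
  by_cases hij : i = j
  · subst hij
    -- route through another part
    set k : Fin m := if i = ⟨0, by omega⟩ then ⟨1, by omega⟩ else ⟨0, by omega⟩ with hk
    have hki : k ≠ i := by
      rw [hk]
      split
      · rename_i h; rw [h]; simp [Fin.ext_iff]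
      · rename_i h; exact fun hc => h hc.symm
    have h1 : Aset S i k = univ := hfull i k (fun h => hki h.symm)
    have h2 : Aset S k i = univ := hfull k i hki
    have hxk : (toGraph m G S).Reachable (i, x) (k, 1 * x) := by
      refine mem_Aset_iff.mp ?_
      rw [h1]; trivial
    have hyk : (toGraph m G S).Reachable (i, y) (k, 1 * y) := by
      refine mem_Aset_iff.mp ?_
      rw [h1]; trivial
    have hkk : ((1:G) * y) * ((1:G) * x)⁻¹ ∈ Aset S k k := by
      have : ((1*y) * (1*x)⁻¹) * 1 ∈ Aset S k k := by
        refine Aset_mul (i := k) (k := i) (j := k) ?_ ?_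
        · rw [h2]; trivial
        · rw [h1]; trivial
      simpa using this
    exact hxk.trans ((mem_Aset_iff.mp hkk).trans hyk.symm)
  · refine mem_Aset_iff.mp ?_
    rw [hfull i j hij]; trivial

/-- not connected gives a non-full cross class -/
lemma exists_not_full (hm : 2 ≤ m) (h : ¬ (toGraph m G S).Connected) :
    ∃ i j : Fin m, i ≠ j ∧ Aset S i j ≠ univ := by
  by_contra hc
  push_neg at hc
  exact h (connected_of_full hm fun i j hij => hc i j hij)

/-- propagation: one full cross class plus side condition makes everything full -/
lemma all_full (hpq : ∃ p q : Fin m, p ≠ q ∧ Aset S p q = univ ∧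
      (∀ r : Fin m, r ≠ p → r ≠ q → (Aset S p r = univ ∨ Aset S r q = univ))) :
    ∀ r s : Fin m, r ≠ s → Aset S r s = univ := by
  obtain ⟨p, q, hpqne, hpq, hside⟩ := hpq
  have claim1 : ∀ r : Fin m, r ≠ p → Aset S p r = univ := by
    intro r hrp
    by_cases hrq : r = q
    · subst hrq; exact hpq
    · rcases hside r hrp hrq with h | h
      · exact h
      · exact Aset_full_mul hpq (Aset_full_inv h)
  intro r s hrs
  by_cases hrp : r = p
  · subst hrp; exact claim1 s (fun h => hrs h.symm)
  · by_cases hsp : s = p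
    · subst hsp; exact Aset_full_inv (claim1 r hrp)
    · exact Aset_full_mul (Aset_full_inv (claim1 r hrp)) (claim1 s hsp)

/-- left coset structure of a nonempty cross class -/
lemma Aset_eq_left_coset {i j : Fin m} {a : G} (ha : a ∈ Aset S i j) :
    Aset S i j = (fun h => a * h) '' (Aset S i i) := by
  ext b
  constructor
  · intro hb
    exact ⟨a⁻¹ * b, Aset_mul hb (Aset_inv ha), by group⟩
  · rintro ⟨h, hh, rfl⟩
    have := Aset_mul hh ha
    simpa [mul_assoc] using this

/-- right coset structure of a nonempty cross class -/
lemma Aset_eq_right_coset {i j : Fin m} {a : G} (ha : a ∈ Aset S i j) :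
    Aset S i j = (fun h => h * a) '' (Aset S j j) := by
  ext b
  constructor
  · intro hb
    refine ⟨b * a⁻¹, Aset_mul (Aset_inv ha) hb, by group⟩
  · rintro ⟨h, hh, rfl⟩
    exact Aset_mul ha hh

section Card
variable [Finite G]

lemma ncard_Aset_left {i j : Fin m} (hne : (Aset S i j).Nonempty) :
    (Aset S i j).ncard = (Aset S i i).ncard := by
  obtain ⟨a, ha⟩ := hne
  rw [Aset_eq_left_coset ha]
  exact Set.ncard_image_of_injective _ (mul_right_injective a)

lemma ncard_Aset_right {i j : Fin m} (hne : (Aset S i j).Nonempty) :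
    (Aset S i j).ncard = (Aset S j j).ncard := by
  obtain ⟨a, ha⟩ := hne
  rw [Aset_eq_right_coset ha]
  exact Set.ncard_image_of_injective _ (mul_left_injective a)

/-- the diagonal class as a subgroup -/
def diagSubgroup (S : Fin m → Fin m → Set G) (i : Fin m) : Subgroup G where
  carrier := Aset S i i
  one_mem' := one_mem_Aset i
  mul_mem' := fun hx hy => Aset_mul hy hx
  inv_mem' := fun hx => Aset_inv hx

lemma ncard_diag_dvd (i : Fin m) : (Aset S i i).ncard ∣ Nat.card G := by
  have : Nat.card (diagSubgroup S i) = (Aset S i i).ncard := by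
    rw [← Nat.card_coe_set_eq]; rfl
  rw [← this]
  exact Subgroup.card_subgroup_dvd_card _

lemma two_mul_ncard_diag_le {i j : Fin m} (hij : Aset S i j ≠ univ)
    (hne : (Aset S i j).Nonempty) :
    2 * (Aset S i i).ncard ≤ Nat.card G := by
  have hdvd := ncard_diag_dvd (S := S) i
  have hlt : (Aset S i j).ncard < Nat.card G := by
    rw [← Set.ncard_univ G]
    exact Set.ncard_lt_ncard (ssubset_univ_iff.mpr hij) (Set.toFinite _)
  rw [ncard_Aset_left hne] at hlt
  obtain ⟨k, hk⟩ := hdvd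
  have hk2 : 2 ≤ k := by
    by_contra hc
    push_neg at hc
    interval_cases k <;> omega
  calc 2 * (Aset S i i).ncard ≤ (Aset S i i).ncard * k := by nlinarith
    _ = Nat.card G := hk.symm

end Card

section Cross

lemma adj_mc_of_not_adj {i j : Fin m} (hij : i ≠ j) {x y : G}
    (h : ¬ (toGraph m G S).Adj (i,x) (j,y)) :
    (toGraph m G (mcCompl m S)).Adj (i,x) (j,y) := by
  have hne : ((i,x) : Fin m × G) ≠ (j,y) := by
    intro hc; exact hij (congrArg Prod.fst hc)
  have h' : ¬ (arcRel m S (i,x) (j,y) ∨ arcRel m S (j,y) (i,x)) := by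
    intro hc; exact h ⟨hne, hc⟩
  push_neg at h'
  refine ⟨hne, Or.inl ?_⟩
  show y * x⁻¹ ∈ mcCompl m S i j
  unfold mcCompl
  rw [if_neg hij]
  exact h'.1

lemma adj_of_not_adj_mc {i j : Fin m} (hij : i ≠ j) {x y : G}
    (h : ¬ (toGraph m G (mcCompl m S)).Adj (i,x) (j,y)) :
    (toGraph m G S).Adj (i,x) (j,y) := by
  have hne : ((i,x) : Fin m × G) ≠ (j,y) := by
    intro hc; exact hij (congrArg Prod.fst hc)
  have h' : ¬ (arcRel m (mcCompl m S) (i,x) (j,y) ∨ arcRel m (mcCompl m S) (j,y) (i,x)) := by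
    intro hc; exact h ⟨hne, hc⟩
  push_neg at h'
  refine ⟨hne, Or.inl ?_⟩
  show y * x⁻¹ ∈ S i j
  have h1 := h'.1
  unfold arcRel mcCompl at h1
  rw [if_neg hij] at h1
  simpa using h1

lemma compl_Aset_subset {i j : Fin m} (hij : i ≠ j) :
    (Aset S i j)ᶜ ⊆ Aset (mcCompl m S) i j := by
  intro g hg
  have hnr : ¬ (toGraph m G S).Reachable (i, 1) (j, g) := by
    intro hc
    exact hg (by simpa using (mem_Aset_iff (S := S) (x := 1) (y := g)).mpr hc)
  have hadj := adj_mc_of_not_adj (S := S) hij (x := 1) (y := g)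
    (fun hc => hnr hc.reachable)
  have : g * (1:G)⁻¹ ∈ Aset (mcCompl m S) i j := mem_Aset_iff.mpr hadj.reachable
  simpa using this

lemma compl_Aset_mc_subset {i j : Fin m} (hij : i ≠ j) :
    (Aset (mcCompl m S) i j)ᶜ ⊆ Aset S i j := by
  intro g hg
  have hnr : ¬ (toGraph m G (mcCompl m S)).Reachable (i, 1) (j, g) := by
    intro hc
    exact hg (by simpa using (mem_Aset_iff (S := mcCompl m S) (x := 1) (y := g)).mpr hc)
  have hadj := adj_of_not_adj_mc (S := S) hij (x := 1) (y := g)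
    (fun hc => hnr hc.reachable)
  have : g * (1:G)⁻¹ ∈ Aset S i j := mem_Aset_iff.mpr hadj.reachable
  simpa using this

lemma not_adj_diag {i : Fin m} (hSi : S i i = ∅) {x y : G} :
    ¬ (toGraph m G S).Adj (i,x) (i,y) := by
  rintro ⟨hne, h | h⟩ <;>
  · unfold arcRel at h
    simp only [hSi] at h
    exact h

end Cross

/-- key counting lemma for the `m ≥ 3` contradiction -/
lemma key_lemma {G : Type*} [Group G] [Finite G] {X Y Z : Set G}
    (hXY : ∀ x ∈ X, ∀ y ∈ Y, x * y ∈ Z)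
    (hc : ∀ x ∈ Xᶜ, ∀ y ∈ Yᶜ, x * y ∈ Zᶜ)
    (hX : X.Nonempty) (hY' : Yᶜ.Nonempty)
    (hYZ : Y.ncard = Z.ncard) (hXZ : Xᶜ.ncard = Zᶜ.ncard) : False := by
  obtain ⟨x, hx⟩ := hX
  obtain ⟨y', hy'⟩ := hY'
  have h1 : (fun y => x * y) '' Y = Z := by
    refine Set.eq_of_subset_of_ncard_le ?_ ?_ (Set.toFinite _)
    · rintro _ ⟨y, hy, rfl⟩; exact hXY x hx y hy
    · rw [Set.ncard_image_of_injective _ (mul_right_injective x), hYZ]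
  have h2 : (fun b => b * y') '' Xᶜ = Zᶜ := by
    refine Set.eq_of_subset_of_ncard_le ?_ ?_ (Set.toFinite _)
    · rintro _ ⟨b, hb, rfl⟩; exact hc b hb y' hy'
    · rw [Set.ncard_image_of_injective _ (mul_left_injective y'), hXZ]
  have hbij : Function.Bijective (fun b : G => b * y') := (Equiv.mulRight y').bijective
  have h3 : (fun b => b * y') '' X = Z := by
    have := Set.image_compl_eq (s := X) hbij
    rw [h2] at this
    exact compl_injective this.symm
  have hxy' : x * y' ∈ Z := by rw [← h3]; exact ⟨x, hx, rfl⟩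
  rw [← h1] at hxy'
  obtain ⟨y, hy, he⟩ := hxy'
  exact hy' (mul_left_cancel he ▸ hy)

end PCayAux


lemma iso_of_char {G : Type*} [Finite G] {k : ℕ}
    (Γ : SimpleGraph (Fin 2 × G)) (P : Fin 2 → G → Prop)
    (hadj : ∀ (i j : Fin 2) (x y : G), Γ.Adj (i,x) (j,y) ↔ (i ≠ j ∧ (P i x ↔ P j y)))
    (hcard : ∀ (i d : Fin 2), Nat.card {x : G // P i x ↔ d = 0} = k) :
    Nonempty (Γ ≃g twoCompleteBipartite k) := by
  classical
  have E : ∀ (i d : Fin 2), {x : G // P i x ↔ d = 0} ≃ Fin k :=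
    fun i d => Finite.equivFinOfCardEq (hcard i d)
  let toF : Fin 2 × G → Fin 2 × Fin 2 × Fin k :=
    fun u => if h : P u.1 u.2
      then ((0 : Fin 2), u.1, E u.1 0 ⟨u.2, iff_of_true h rfl⟩)
      else ((1 : Fin 2), u.1, E u.1 1 ⟨u.2, iff_of_false h (by decide)⟩)
  let invF : Fin 2 × Fin 2 × Fin k → Fin 2 × G :=
    fun v => (v.2.1, ((E v.2.1 v.1).symm v.2.2).val)
  have hleft : Function.LeftInverse invF toF := by
    rintro ⟨i, x⟩
    by_cases h : P i x
    · simp only [toF, dif_pos h, invF, Equiv.symm_apply_apply]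
    · simp only [toF, dif_neg h, invF, Equiv.symm_apply_apply]
  have hright : Function.RightInverse invF toF := by
    rintro ⟨d, i, t⟩
    by_cases hd : d = 0
    case pos =>
      subst hd
      have hp : P i ((E i 0).symm t).val := ((E i 0).symm t).property.mpr rfl
      simp only [invF, toF, dif_pos hp]
      refine Prod.ext rfl (Prod.ext rfl ?_)
      have : (⟨((E i 0).symm t).val, iff_of_true hp rfl⟩ :
          {x : G // P i x ↔ (0 : Fin 2) = 0}) = (E i 0).symm t := Subtype.ext rfl
      rw [this, Equiv.apply_symm_apply]
    case neg =>
      have hd1 : d = 1 := by rw [Fin.ext_iff] at hd ⊢; omega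
      subst hd1
      have hp : ¬ P i ((E i 1).symm t).val := by
        intro hc
        exact absurd (((E i 1).symm t).property.mp hc) (by decide)
      simp only [invF, toF, dif_neg hp]
      refine Prod.ext rfl (Prod.ext rfl ?_)
      have : (⟨((E i 1).symm t).val, iff_of_false hp (by decide)⟩ :
          {x : G // P i x ↔ (1 : Fin 2) = 0}) = (E i 1).symm t := Subtype.ext rfl
      rw [this, Equiv.apply_symm_apply]
  refine ⟨⟨⟨toF, invF, hleft, hright⟩, ?_⟩⟩
  rintro ⟨i, x⟩ ⟨j, y⟩
  show (twoCompleteBipartite k).Adj (toF (i,x)) (toF (j,y)) ↔ Γ.Adj (i,x) (j,y)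
  rw [hadj]
  have hfst : ∀ (p : Fin 2) (z : G), (toF (p,z)).1 = if P p z then 0 else 1 := by
    intro p z
    by_cases h : P p z
    · simp only [toF, dif_pos h, if_pos h]
    · simp only [toF, dif_neg h, if_neg h]
  have hsnd : ∀ (p : Fin 2) (z : G), (toF (p,z)).2.1 = p := by
    intro p z
    by_cases h : P p z
    · simp only [toF, dif_pos h]
    · simp only [toF, dif_neg h]
  show ((toF (i,x)).1 = (toF (j,y)).1 ∧ (toF (i,x)).2.1 ≠ (toF (j,y)).2.1) ↔ _
  rw [hfst, hfst, hsnd, hsnd]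
  by_cases h1 : P i x <;> by_cases h2 : P j y <;>
    simp [h1, h2, and_comm]



open PCayAux Set in
/-- If `m ≥ 2` and both an `m`-PCayley digraph `Γ` of a finite
group `G` and its multipartite complement `Γ^{mc}` are disconnected (as underlying
graphs), then `m = 2`, `|G|` is even, and `Γ` is isomorphic to the disjoint union
of two complete bipartite graphs `K_{|G|/2, |G|/2}`. -/
theorem disconnected_both (G : Type*) [Group G] [Finite G] (m : ℕ) (hm : 2 ≤ m)
    (S : Fin m → Fin m → Set G) (hS : ∀ i, S i i = (∅ : Set G))
    (h1 : ¬ (toGraph m G S).Connected)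
    (h2 : ¬ (toGraph m G (mcCompl m S)).Connected) :
    m = 2 ∧ Even (Nat.card G) ∧
      Nonempty (toGraph m G S ≃g twoCompleteBipartite (Nat.card G / 2)) := by

  classical
  obtain ⟨i0, j0, hne0, hA0⟩ := exists_not_full hm h1
  obtain ⟨k0, l0, hne1, hA1⟩ := exists_not_full hm h2
  -- Step 2 : all cross classes (both graphs) are nonempty
  have hNE : ∀ p q : Fin m, p ≠ q → (Aset S p q).Nonempty := by
    intro p q hpq
    by_contra hc
    rw [Set.not_nonempty_iff_eq_empty] at hc
    have hfull : Aset (mcCompl m S) p q = univ := by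
      apply eq_univ_of_forall
      intro g
      exact compl_Aset_subset hpq (by rw [hc]; exact notMem_empty g)
    apply h2
    apply connected_of_full hm
    apply all_full
    refine ⟨p, q, hpq, hfull, ?_⟩
    intro r hrp hrq
    by_contra hboth
    push_neg at hboth
    obtain ⟨g, hg⟩ := (Set.ne_univ_iff_exists_notMem _).mp hboth.1
    obtain ⟨g', hg'⟩ := (Set.ne_univ_iff_exists_notMem _).mp hboth.2
    have hg2 : g ∈ Aset S p r := compl_Aset_mc_subset (fun h => hrp h.symm) hg
    have hg'2 : g' ∈ Aset S r q := compl_Aset_mc_subset hrq hg'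
    have := Aset_mul hg2 hg'2
    rw [hc] at this
    exact notMem_empty _ this
  have hNE' : ∀ p q : Fin m, p ≠ q → (Aset (mcCompl m S) p q).Nonempty := by
    intro p q hpq
    by_contra hc
    rw [Set.not_nonempty_iff_eq_empty] at hc
    have hfull : Aset S p q = univ := by
      apply eq_univ_of_forall
      intro g
      exact compl_Aset_mc_subset hpq (by rw [hc]; exact notMem_empty g)
    apply h1
    apply connected_of_full hm
    apply all_full
    refine ⟨p, q, hpq, hfull, ?_⟩
    intro r hrp hrq
    by_contra hboth
    push_neg at hboth
    obtain ⟨g, hg⟩ := (Set.ne_univ_iff_exists_notMem _).mp hboth.1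
    obtain ⟨g', hg'⟩ := (Set.ne_univ_iff_exists_notMem _).mp hboth.2
    have hg2 : g ∈ Aset (mcCompl m S) p r := compl_Aset_subset (fun h => hrp h.symm) hg
    have hg'2 : g' ∈ Aset (mcCompl m S) r q := compl_Aset_subset hrq hg'
    have := Aset_mul hg2 hg'2
    rw [hc] at this
    exact notMem_empty _ this
  -- diagonal cardinalities all agree
  have diagEq : ∀ p q : Fin m, (Aset S p p).ncard = (Aset S q q).ncard := by
    intro p q
    by_cases h : p = q
    · rw [h]
    · rw [← ncard_Aset_left (hNE p q h), ncard_Aset_right (hNE p q h)]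
  have diagEq' : ∀ p q : Fin m,
      (Aset (mcCompl m S) p p).ncard = (Aset (mcCompl m S) q q).ncard := by
    intro p q
    by_cases h : p = q
    · rw [h]
    · rw [← ncard_Aset_left (hNE' p q h), ncard_Aset_right (hNE' p q h)]
  set n := Nat.card G with hn
  set h0 := (Aset S i0 i0).ncard with hh0
  set h0' := (Aset (mcCompl m S) i0 i0).ncard with hh0'
  have crossCard : ∀ p q : Fin m, p ≠ q → (Aset S p q).ncard = h0 := by
    intro p q hpq
    rw [ncard_Aset_left (hNE p q hpq), hh0, diagEq p i0]
  have crossCard' : ∀ p q : Fin m, p ≠ q → (Aset (mcCompl m S) p q).ncard = h0' := by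
    intro p q hpq
    rw [ncard_Aset_left (hNE' p q hpq), hh0', diagEq' p i0]
  have hbound : 2 * h0 ≤ n := two_mul_ncard_diag_le hA0 (hNE _ _ hne0)
  have hbound' : 2 * h0' ≤ n := by
    have := two_mul_ncard_diag_le hA1 (hNE' _ _ hne1)
    rwa [diagEq' k0 i0] at this
  have hunion : ∀ p q : Fin m, p ≠ q →
      Aset S p q ∪ Aset (mcCompl m S) p q = univ := by
    intro p q hpq
    apply eq_univ_of_forall
    intro g
    by_cases hg : g ∈ Aset S p q
    · exact Or.inl hg
    · exact Or.inr (compl_Aset_subset hpq hg)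
  have hsum : n ≤ h0 + h0' := by
    have h := hunion i0 j0 hne0
    calc n = (Aset S i0 j0 ∪ Aset (mcCompl m S) i0 j0).ncard := by
          rw [h, Set.ncard_univ]
      _ ≤ (Aset S i0 j0).ncard + (Aset (mcCompl m S) i0 j0).ncard :=
          Set.ncard_union_le _ _
      _ = h0 + h0' := by rw [crossCard i0 j0 hne0, crossCard' i0 j0 hne0]
  have heq : h0 = h0' ∧ n = 2 * h0 := by omega
  -- complement identity for every pair
  have hcompl : ∀ p q : Fin m, p ≠ q →
      Aset (mcCompl m S) p q = (Aset S p q)ᶜ := by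
    intro p q hpq
    have hint : (Aset S p q ∩ Aset (mcCompl m S) p q).ncard = 0 := by
      have := Set.ncard_union_add_ncard_inter (Aset S p q) (Aset (mcCompl m S) p q)
        (Set.toFinite _) (Set.toFinite _)
      rw [hunion p q hpq, Set.ncard_univ, crossCard p q hpq, crossCard' p q hpq] at this
      omega
    rw [Set.ncard_eq_zero (Set.toFinite _)] at hint
    ext g
    constructor
    · intro hg hg2
      have : g ∈ Aset S p q ∩ Aset (mcCompl m S) p q := ⟨hg2, hg⟩
      rw [hint] at this
      exact notMem_empty _ this
    · intro hg
      exact compl_Aset_subset hpq hg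
  -- m = 2
  have hm2 : m = 2 := by
    by_contra hn2
    have hm3 : 3 ≤ m := by omega
    set p0 : Fin m := ⟨0, by omega⟩
    set p1 : Fin m := ⟨1, by omega⟩
    set p2 : Fin m := ⟨2, by omega⟩
    have h01 : p0 ≠ p1 := by simp [p0, p1, Fin.ext_iff]
    have h12 : p1 ≠ p2 := by simp [p1, p2, Fin.ext_iff]
    have h02 : p0 ≠ p2 := by simp [p0, p2, Fin.ext_iff]
    refine key_lemma (X := Aset S p1 p2) (Y := Aset S p0 p1) (Z := Aset S p0 p2)
      ?_ ?_ (hNE p1 p2 h12) ?_ ?_ ?_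
    · intro x hx y hy
      exact Aset_mul hy hx
    · intro x hx y hy
      rw [← hcompl p1 p2 h12] at hx
      rw [← hcompl p0 p1 h01] at hy
      have := Aset_mul hy hx
      rw [hcompl p0 p2 h02] at this
      exact this
    · rw [← hcompl p0 p1 h01]
      exact hNE' p0 p1 h01
    · rw [crossCard p0 p1 h01, crossCard p0 p2 h02]
    · rw [← hcompl p1 p2 h12, ← hcompl p0 p2 h02,
        crossCard' p1 p2 h12, crossCard' p0 p2 h02]
  subst hm2
  refine ⟨rfl, ⟨h0, by omega⟩, ?_⟩
  have h01 : (0 : Fin 2) ≠ 1 := by decide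
  have hH0 : (Aset S 0 0).ncard = h0 := by rw [hh0, diagEq 0 i0]
  have hn2 : n = 2 * h0 := heq.2
  have cardcompl : ∀ T : Set G, T.ncard = h0 → Tᶜ.ncard = h0 := by
    intro T hT
    have := Set.ncard_add_ncard_compl T (Set.toFinite _) (Set.toFinite _)
    omega
  have Hmul : ∀ {x y : G}, x ∈ Aset S 0 0 → y ∈ Aset S 0 0 → x * y ∈ Aset S 0 0 :=
    fun hx hy => Aset_mul hy hx
  have Hinv : ∀ {x : G}, x ∈ Aset S 0 0 → x⁻¹ ∈ Aset S 0 0 := fun hx => Aset_inv hx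
  have hHc : (Aset S 0 0)ᶜ.ncard = h0 := cardcompl _ hH0
  have mulrule : ∀ g1 g2 : G,
      (g1 * g2 ∈ Aset S 0 0 ↔ ((g1 ∈ Aset S 0 0) ↔ (g2 ∈ Aset S 0 0))) := by
    intro g1 g2
    by_cases hg1 : g1 ∈ Aset S 0 0
    · constructor
      · intro h
        have hg2 : g2 ∈ Aset S 0 0 := by
          have := Hmul (Hinv hg1) h
          rwa [show g1⁻¹ * (g1 * g2) = g2 by group] at this
        exact iff_of_true hg1 hg2
      · intro h
        exact Hmul hg1 (h.mp hg1)
    · have hprod : ∀ {y : G}, y ∉ Aset S 0 0 → g1 * y ∈ Aset S 0 0 := by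
        intro y hy
        have himg : (fun h => h * y⁻¹) '' (Aset S 0 0) = (Aset S 0 0)ᶜ := by
          refine Set.eq_of_subset_of_ncard_le ?_ ?_ (Set.toFinite _)
          · rintro _ ⟨h, hh, rfl⟩ hmem
            apply hy
            have := Hmul (Hinv hmem) hh
            rwa [show (h * y⁻¹)⁻¹ * h = y by group] at this
          · rw [Set.ncard_image_of_injective _ (mul_left_injective y⁻¹), hH0, hHc]
        have hg1' : g1 ∈ (Aset S 0 0)ᶜ := hg1
        rw [← himg] at hg1'
        obtain ⟨h, hh, he⟩ := hg1'
        have : g1 * y = h := by rw [← he]; group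
        rw [this]
        exact hh
      constructor
      · intro h
        refine iff_of_false hg1 ?_
        intro hg2
        apply hg1
        have := Hmul h (Hinv hg2)
        rwa [show g1 * g2 * g2⁻¹ = g1 by group] at this
      · intro hiff
        exact hprod (fun h => hg1 (hiff.mpr h))
  obtain ⟨a, ha⟩ := hNE 0 1 h01
  have memA_iff : ∀ g : G, g ∈ Aset S 0 1 ↔ a⁻¹ * g ∈ Aset S 0 0 := by
    intro g
    rw [Aset_eq_left_coset ha]
    constructor
    · rintro ⟨h, hh, rfl⟩
      rwa [show a⁻¹ * (a * h) = h by group]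
    · intro hmem
      exact ⟨a⁻¹ * g, hmem, by group⟩
  have adj01 : ∀ x y : G, (toGraph 2 G S).Adj (0,x) (1,y) ↔ y * x⁻¹ ∈ Aset S 0 1 := by
    intro x y
    constructor
    · intro h
      exact mem_Aset_iff.mpr h.reachable
    · intro h
      apply adj_of_not_adj_mc h01
      intro hmc
      have hmem : y * x⁻¹ ∈ Aset (mcCompl 2 S) 0 1 := mem_Aset_iff.mpr hmc.reachable
      rw [hcompl 0 1 h01] at hmem
      exact hmem h
  have hxinv : ∀ x : G, (x⁻¹ ∈ Aset S 0 0 ↔ x ∈ Aset S 0 0) :=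
    fun x => ⟨fun h => by simpa using Aset_inv h, fun h => Aset_inv h⟩
  have hfin2 : ∀ z : Fin 2, z = 0 ∨ z = 1 := by decide
  refine iso_of_char (toGraph 2 G S)
    (fun i x => if i = 0 then x ∈ Aset S 0 0 else a⁻¹ * x ∈ Aset S 0 0) ?_ ?_
  · intro i j x y
    rcases hfin2 i with rfl | rfl <;> rcases hfin2 j with rfl | rfl
    · exact iff_of_false (not_adj_diag (hS 0)) (by simp)
    · rw [adj01 x y, memA_iff, show a⁻¹ * (y * x⁻¹) = (a⁻¹ * y) * x⁻¹ by group,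
        mulrule, hxinv x]
      simp only [if_pos rfl, if_neg h01.symm, reduceIte]
      exact ⟨fun h => ⟨h01, h.symm⟩, fun h => h.2.symm⟩
    · rw [(toGraph 2 G S).adj_comm, adj01 y x, memA_iff,
        show a⁻¹ * (x * y⁻¹) = (a⁻¹ * x) * y⁻¹ by group, mulrule, hxinv y]
      simp only [if_pos rfl, if_neg h01.symm, reduceIte]
      exact ⟨fun h => ⟨h01.symm, h⟩, fun h => h.2⟩
    · exact iff_of_false (not_adj_diag (hS 1)) (by simp)
  · intro i d
    have hk : Nat.card G / 2 = h0 := by omega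
    rcases hfin2 i with rfl | rfl <;> rcases hfin2 d with rfl | rfl
    · have hset : {x : G | (if (0:Fin 2) = 0 then x ∈ Aset S 0 0 else a⁻¹ * x ∈ Aset S 0 0)
          ↔ (0:Fin 2) = 0} = Aset S 0 0 := by
        ext x; simp
      calc Nat.card {x : G // (if (0:Fin 2) = 0 then x ∈ Aset S 0 0 else a⁻¹ * x ∈ Aset S 0 0)
              ↔ (0:Fin 2) = 0}
          = ({x : G | (if (0:Fin 2) = 0 then x ∈ Aset S 0 0 else a⁻¹ * x ∈ Aset S 0 0)
              ↔ (0:Fin 2) = 0} : Set G).ncard := Nat.card_coe_set_eq _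
        _ = Nat.card G / 2 := by rw [hset, hH0, hk]
    · have hset : {x : G | (if (0:Fin 2) = 0 then x ∈ Aset S 0 0 else a⁻¹ * x ∈ Aset S 0 0)
          ↔ (1:Fin 2) = 0} = (Aset S 0 0)ᶜ := by
        ext x; simp [h01.symm]
      calc Nat.card {x : G // (if (0:Fin 2) = 0 then x ∈ Aset S 0 0 else a⁻¹ * x ∈ Aset S 0 0)
              ↔ (1:Fin 2) = 0}
          = ({x : G | (if (0:Fin 2) = 0 then x ∈ Aset S 0 0 else a⁻¹ * x ∈ Aset S 0 0)
              ↔ (1:Fin 2) = 0} : Set G).ncard := Nat.card_coe_set_eq _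
        _ = Nat.card G / 2 := by rw [hset, hHc, hk]
    · have him : ({x : G | a⁻¹ * x ∈ Aset S 0 0} : Set G).ncard = h0 := by
        have himg : {x : G | a⁻¹ * x ∈ Aset S 0 0} = (fun h => a * h) '' (Aset S 0 0) := by
          ext x
          constructor
          · intro hx
            exact ⟨a⁻¹ * x, hx, by group⟩
          · rintro ⟨h, hh, rfl⟩
            show a⁻¹ * (a * h) ∈ Aset S 0 0
            rwa [show a⁻¹ * (a * h) = h by group]
        rw [himg, Set.ncard_image_of_injective _ (mul_right_injective a), hH0]
      have hset : {x : G | (if (1:Fin 2) = 0 then x ∈ Aset S 0 0 else a⁻¹ * x ∈ Aset S 0 0)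
          ↔ (0:Fin 2) = 0} = {x : G | a⁻¹ * x ∈ Aset S 0 0} := by
        ext x; simp [h01.symm]
      calc Nat.card {x : G // (if (1:Fin 2) = 0 then x ∈ Aset S 0 0 else a⁻¹ * x ∈ Aset S 0 0)
              ↔ (0:Fin 2) = 0}
          = ({x : G | (if (1:Fin 2) = 0 then x ∈ Aset S 0 0 else a⁻¹ * x ∈ Aset S 0 0)
              ↔ (0:Fin 2) = 0} : Set G).ncard := Nat.card_coe_set_eq _
        _ = Nat.card G / 2 := by rw [hset, him, hk]
    · have him : ({x : G | a⁻¹ * x ∈ Aset S 0 0} : Set G).ncard = h0 := by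
        have himg : {x : G | a⁻¹ * x ∈ Aset S 0 0} = (fun h => a * h) '' (Aset S 0 0) := by
          ext x
          constructor
          · intro hx
            exact ⟨a⁻¹ * x, hx, by group⟩
          · rintro ⟨h, hh, rfl⟩
            show a⁻¹ * (a * h) ∈ Aset S 0 0
            rwa [show a⁻¹ * (a * h) = h by group]
        rw [himg, Set.ncard_image_of_injective _ (mul_right_injective a), hH0]
      have hset : {x : G | (if (1:Fin 2) = 0 then x ∈ Aset S 0 0 else a⁻¹ * x ∈ Aset S 0 0)
          ↔ (1:Fin 2) = 0} = {x : G | a⁻¹ * x ∈ Aset S 0 0}ᶜ := by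
        ext x; simp [h01.symm]
      calc Nat.card {x : G // (if (1:Fin 2) = 0 then x ∈ Aset S 0 0 else a⁻¹ * x ∈ Aset S 0 0)
              ↔ (1:Fin 2) = 0}
          = ({x : G | (if (1:Fin 2) = 0 then x ∈ Aset S 0 0 else a⁻¹ * x ∈ Aset S 0 0)
              ↔ (1:Fin 2) = 0} : Set G).ncard := Nat.card_coe_set_eq _
        _ = Nat.card G / 2 := by rw [hset, cardcompl _ him, hk]
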